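/- Let P be a homogeneous subgroup of homogeneous dimension d of a Carnot group G with homogeneous distance ρ. Then the restriction to P of the d-dimensional Hausdorff measure H^d (or spherical measure S^d) built from ρ is a nonzero, locally finite, left-invariant measure on P, i.e., a Haar measure of P. -/

import Mathlib

open MeasureTheory

/-- The `d`-dimensional spherical Hausdorff measure of a metric space: in the Carathéodory
construction, a covering set is charged `(2r)^d` where `r` is the radius of the smallest
closed ball containing it (so only coverings by closed balls matter). -/
noncomputable def sphericalMeasure (X : Type*) [MetricSpace X] [MeasurableSpace X]
    [BorelSpace X] (d : ℝ) : Measure X :=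
  Measure.mkMetric' fun E =>
    ⨅ (x : X) (r : ℝ) (_ : 0 < r) (_ : E ⊆ Metric.closedBall x r),
      ENNReal.ofReal (2 * r) ^ d

section Aux

open Metric Set Function
open scoped ENNReal NNReal

noncomputable def sgauge (X : Type*) [MetricSpace X] (d : ℝ) : Set X → ℝ≥0∞ := fun E =>
  ⨅ (x : X) (r : ℝ) (_ : 0 < r) (_ : E ⊆ Metric.closedBall x r),
      ENNReal.ofReal (2 * r) ^ d

lemma diam_rpow_le_sgauge {X : Type*} [MetricSpace X] {d : ℝ} (hd : 0 ≤ d) (E : Set X) :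
    EMetric.diam E ^ d ≤ sgauge X d E := by
  refine le_iInf fun x => le_iInf fun r => le_iInf fun hr => le_iInf fun hE => ?_
  refine ENNReal.rpow_le_rpow ?_ hd
  refine EMetric.diam_le fun a ha b hb => ?_
  calc edist a b ≤ edist a x + edist x b := edist_triangle _ _ _
    _ ≤ ENNReal.ofReal r + ENNReal.ofReal r := by
        gcongr
        · rw [edist_dist, ENNReal.ofReal_le_ofReal_iff hr.le]; exact hE ha
        · rw [edist_comm, edist_dist, ENNReal.ofReal_le_ofReal_iff hr.le]; exact hE hb
    _ = ENNReal.ofReal (2 * r) := by rw [← ENNReal.ofReal_add hr.le hr.le]; ring_nf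

lemma sgauge_le {X : Type*} [MetricSpace X] [Nonempty X] {d : ℝ} (hd : 0 < d) (E : Set X) :
    sgauge X d E ≤ (2 : ℝ≥0∞) ^ d * EMetric.diam E ^ d := by
  rcases eq_or_ne (EMetric.diam E) ⊤ with htop | htop
  · rw [htop, ENNReal.top_rpow_of_pos hd, ENNReal.mul_top]
    · exact le_top
    · exact (ENNReal.rpow_pos two_pos ENNReal.ofNat_ne_top).ne'
  rcases eq_or_ne (EMetric.diam E) 0 with h0 | h0
  · rw [h0, ENNReal.zero_rpow_of_pos hd, mul_zero]
    obtain ⟨x⟩ := ‹Nonempty X›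
    have hsub : ∀ r : ℝ, 0 < r → ∃ y : X, E ⊆ Metric.closedBall y r := by
      intro r hr
      rcases E.eq_empty_or_nonempty with rfl | ⟨z, hz⟩
      · exact ⟨x, empty_subset _⟩
      · refine ⟨z, fun w hw => ?_⟩
        have h1 : edist w z = 0 := by
          have := EMetric.edist_le_diam_of_mem hw hz
          simpa [show Metric.ediam E = 0 from h0] using this
        have : dist w z = 0 := by simp [dist_edist, h1]
        simp [Metric.mem_closedBall, this, hr.le]
    have key : ∀ ε : ℝ≥0∞, 0 < ε → sgauge X d E ≤ ε := by
      intro ε hε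
      rcases eq_or_ne ε ⊤ with rfl | hεt
      · exact le_top
      have hc : (0:ℝ≥0∞) < ε ^ (1/d) := ENNReal.rpow_pos hε hεt
      have hct : ε ^ (1/d) ≠ ⊤ :=
        ENNReal.rpow_ne_top_of_nonneg (by positivity) hεt
      set u : ℝ := (ε ^ (1/d)).toReal with hu
      have hu0 : 0 < u := ENNReal.toReal_pos hc.ne' hct
      obtain ⟨y, hy⟩ := hsub (u/2) (by positivity)
      calc sgauge X d E ≤ ENNReal.ofReal (2 * (u/2)) ^ d := by
            exact iInf_le_of_le y (iInf_le_of_le (u/2) (iInf_le_of_le (by positivity)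
              (iInf_le _ hy)))
        _ = ε := by
            rw [show 2 * (u/2) = u by ring, hu, ENNReal.ofReal_toReal hct,
              ← ENNReal.rpow_mul, one_div, inv_mul_cancel₀ hd.ne', ENNReal.rpow_one]
    refine ENNReal.le_of_forall_pos_le_add fun ε hε _ => ?_
    simpa using key ε (by exact_mod_cast hε)
  · have hnt : E.Nontrivial := EMetric.diam_pos_iff.1 (h0.bot_lt)
    obtain ⟨z, hz, -⟩ := hnt
    have hbdd : Bornology.IsBounded E := by
      rw [Metric.isBounded_iff_ediam_ne_top]; exact htop
    have hdiam : 0 < Metric.diam E := by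
      rw [Metric.diam]; exact ENNReal.toReal_pos h0 htop
    have hsubball : E ⊆ Metric.closedBall z (Metric.diam E) := fun w hw =>
      Metric.mem_closedBall.2 (Metric.dist_le_diam_of_mem hbdd hw hz)
    calc sgauge X d E ≤ ENNReal.ofReal (2 * Metric.diam E) ^ d :=
          iInf_le_of_le z (iInf_le_of_le (Metric.diam E) (iInf_le_of_le hdiam
            (iInf_le _ hsubball)))
      _ = (2 : ℝ≥0∞) ^ d * EMetric.diam E ^ d := by
          show _ = (2 : ℝ≥0∞) ^ d * Metric.ediam E ^ d; rw [ENNReal.ofReal_mul (by norm_num), ← ENNReal.mul_rpow_of_nonneg _ _ hd.le,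
            Metric.diam, ENNReal.ofReal_toReal (show Metric.ediam E ≠ ⊤ from htop), ENNReal.ofReal_ofNat]

lemma outerMkMetric'_mono {X : Type*} [EMetricSpace X] {m₁ m₂ : Set X → ℝ≥0∞}
    (h : ∀ s, m₁ s ≤ m₂ s) :
    (OuterMeasure.mkMetric' m₁ : OuterMeasure X) ≤ OuterMeasure.mkMetric' m₂ := by
  refine iSup₂_mono fun r hr => ?_
  exact OuterMeasure.mkMetric'.le_pre.2 fun s hs =>
    (OuterMeasure.mkMetric'.pre_le hs).trans (h s)

lemma sgauge_image_le {X : Type*} [MetricSpace X] (d : ℝ) (e : X ≃ᵢ X) (s : Set X) :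
    sgauge X d (e '' s) ≤ sgauge X d s := by
  refine le_iInf fun x => le_iInf fun r => le_iInf fun hr => le_iInf fun hs => ?_
  refine iInf_le_of_le (e x) (iInf_le_of_le r (iInf_le_of_le hr (iInf_le _ ?_)))
  rintro - ⟨y, hy, rfl⟩
  simpa [Metric.mem_closedBall, e.dist_eq] using hs hy

lemma sgauge_image_eq {X : Type*} [MetricSpace X] (d : ℝ) (e : X ≃ᵢ X) (s : Set X) :
    sgauge X d (e '' s) = sgauge X d s := by
  refine le_antisymm (sgauge_image_le d e s) ?_
  have h2 := sgauge_image_le d e.symm (e '' s)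
  rwa [show e.symm '' (e '' s) = s by simp [Set.image_image]] at h2

lemma outer_sgauge_image {X : Type*} [MetricSpace X] (d : ℝ) (e : X ≃ᵢ X) (s : Set X) :
    (OuterMeasure.mkMetric' (sgauge X d) : OuterMeasure X) (e '' s)
      = OuterMeasure.mkMetric' (sgauge X d) s := by
  have hcomap : OuterMeasure.comap e (OuterMeasure.mkMetric' (sgauge X d))
      = OuterMeasure.mkMetric' (sgauge X d) := by
    simp only [OuterMeasure.mkMetric', OuterMeasure.mkMetric'.pre, OuterMeasure.comap_iSup]
    refine surjective_id.iSup_congr id fun ε => surjective_id.iSup_congr id fun hε => ?_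
    rw [OuterMeasure.comap_boundedBy _ (Or.inr e.surjective)]
    congr with t : 1
    apply extend_congr
    · simp [e.isometry.ediam_image]
    · intros; exact sgauge_image_eq d e t
  calc (OuterMeasure.mkMetric' (sgauge X d) : OuterMeasure X) (e '' s)
      = (OuterMeasure.comap e (OuterMeasure.mkMetric' (sgauge X d))) s := by
        rw [OuterMeasure.comap_apply]
    _ = _ := by rw [hcomap]

lemma sphericalMeasure_apply {X : Type*} [MetricSpace X] [MeasurableSpace X]
    [BorelSpace X] (d : ℝ) {A : Set X} (hA : MeasurableSet A) :
    sphericalMeasure X d A = (OuterMeasure.mkMetric' (sgauge X d) : OuterMeasure X) A := by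
  show Measure.mkMetric' (sgauge X d) A = _
  exact toMeasure_apply _ _ hA

lemma sphericalMeasure_map {X : Type*} [MetricSpace X] [MeasurableSpace X]
    [BorelSpace X] (d : ℝ) (e : X ≃ᵢ X) :
    Measure.map e (sphericalMeasure X d) = sphericalMeasure X d := by
  refine Measure.ext fun A hA => ?_
  rw [Measure.map_apply e.continuous.measurable hA,
    sphericalMeasure_apply d (hA.preimage e.continuous.measurable), sphericalMeasure_apply d hA]
  have : (e : X → X) ⁻¹' A = e.symm '' A := by
    ext y; simp [IsometryEquiv.apply_symm_apply, Set.mem_image]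
    constructor
    · intro h; exact ⟨e y, h, by simp⟩
    · rintro ⟨z, hz, rfl⟩; simpa using hz
  rw [this, outer_sgauge_image d e.symm A]

lemma hausdorff_le_spherical {X : Type*} [MetricSpace X] [MeasurableSpace X] [BorelSpace X]
    {d : ℝ} (hd : 0 < d) {A : Set X} (hA : MeasurableSet A) :
    μH[d] A ≤ sphericalMeasure X d A := by
  rw [sphericalMeasure_apply d hA]
  have h1 : μH[d] A = (OuterMeasure.mkMetric (fun r => r ^ d) : OuterMeasure X) A := by
    rw [OuterMeasure.coe_mkMetric]; rfl
  rw [h1]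
  exact outerMkMetric'_mono (fun s => diam_rpow_le_sgauge hd.le s) A

lemma spherical_le_hausdorff {X : Type*} [MetricSpace X] [Nonempty X] [MeasurableSpace X]
    [BorelSpace X] {d : ℝ} (hd : 0 < d) {A : Set X} (hA : MeasurableSet A) :
    sphericalMeasure X d A ≤ (2:ℝ≥0∞) ^ d * μH[d] A := by
  rw [sphericalMeasure_apply d hA]
  have h2top : ((2:ℝ≥0∞) ^ d) ≠ ⊤ := ENNReal.rpow_ne_top_of_nonneg hd.le ENNReal.ofNat_ne_top
  have h20 : ((2:ℝ≥0∞) ^ d) ≠ 0 := (ENNReal.rpow_pos two_pos ENNReal.ofNat_ne_top).ne'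
  have h1 : (OuterMeasure.mkMetric' (sgauge X d) : OuterMeasure X)
      ≤ OuterMeasure.mkMetric (fun r : ℝ≥0∞ => (2:ℝ≥0∞) ^ d * r ^ d) :=
    outerMkMetric'_mono (fun s => sgauge_le hd s)
  have h2 := OuterMeasure.mkMetric_smul (X := X) (fun r : ℝ≥0∞ => r ^ d) h2top h20
  simp only [Pi.smul_def, smul_eq_mul] at h2
  calc (OuterMeasure.mkMetric' (sgauge X d) : OuterMeasure X) A
      ≤ (OuterMeasure.mkMetric (fun r : ℝ≥0∞ => (2:ℝ≥0∞) ^ d * r ^ d) : OuterMeasure X) A :=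
        h1 A
    _ = ((2:ℝ≥0∞) ^ d) * (OuterMeasure.mkMetric (fun r : ℝ≥0∞ => r ^ d) : OuterMeasure X) A := by
        rw [h2]; rfl
    _ = (2:ℝ≥0∞) ^ d * μH[d] A := by rw [OuterMeasure.coe_mkMetric]; rfl

end Aux

section Main
open Metric Set Function
open scoped ENNReal NNReal

/-- Let `P` be a homogeneous subgroup, of homogeneous dimension `d` (i.e. a Haar measure
`θ` of `P` satisfies `(δ_λ)_# θ = λ^(-d) θ`), of a Carnot group `G` with homogeneous
distance.  Then the restriction to `P` of the `d`-dimensional Hausdorff measure `H^d` (or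
of the spherical measure `S^d`) is a nonzero, locally finite, left-invariant measure on
`P`, i.e. a Haar measure of `P`. -/
theorem hausdorff_restrict_homogeneous_subgroup_is_haar
    {G : Type*} [Group G] [MetricSpace G] [ProperSpace G]
    [MeasurableSpace G] [BorelSpace G]
    (δ : ℝ → G → G)
    (hδ_one : ∀ lam : ℝ, δ lam (1 : G) = 1)
    (hleft : ∀ g x y : G, dist (g * x) (g * y) = dist x y)
    (hhom : ∀ lam : ℝ, 0 < lam → ∀ x y : G, dist (δ lam x) (δ lam y) = lam * dist x y)
    (P : Subgroup G) (hPclosed : IsClosed (P : Set G))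
    (hPhom : ∀ lam : ℝ, 0 < lam → ∀ x ∈ P, δ lam x ∈ P)
    (d : ℝ) (hd : 0 < d)
    (θ : Measure G) (hθ_ne : θ ≠ 0) (hθ_null : θ ((P : Set G)ᶜ) = 0)
    (hθ_inv : ∀ p ∈ P, Measure.map (fun x => p * x) θ = θ)
    (hθ_fin : ∀ K : Set G, IsCompact K → θ K < ⊤)
    (hθ_pos : ∀ U : Set G, IsOpen U → (U ∩ (P : Set G)).Nonempty → 0 < θ U)
    (hθ_scal : ∀ lam : ℝ, 0 < lam →
      Measure.map (δ lam) θ = ENNReal.ofReal (lam ^ (-d)) • θ)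
    (ψ : Measure G)
    (hψ : ψ = μH[d] ∨ ψ = sphericalMeasure G d) :
    ψ.restrict (P : Set G) ≠ 0 ∧
    (∀ p ∈ P, Measure.map (fun x => p * x) (ψ.restrict (P : Set G)) =
      ψ.restrict (P : Set G)) ∧
    (∀ K : Set G, IsCompact K → ψ.restrict (P : Set G) K < ⊤) ∧
    (∀ U : Set G, IsOpen U → (U ∩ (P : Set G)).Nonempty →
      0 < ψ.restrict (P : Set G) U) := by
  have hPmeas : MeasurableSet (P : Set G) := hPclosed.measurableSet
  have hiso : ∀ p : G, Isometry (fun x => p * x) :=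
    fun p => Isometry.of_dist_eq (hleft p)
  have hδcont : ∀ lam : ℝ, 0 < lam → Continuous (δ lam) := by
    intro lam hlam
    refine LipschitzWith.continuous (K := lam.toNNReal) (LipschitzWith.of_dist_le_mul ?_)
    intro x y
    rw [hhom lam hlam x y, Real.coe_toNNReal lam hlam.le]
  set c : ℝ≥0∞ := θ (closedBall (1:G) 1) with hc
  -- scaling of balls at the identity
  have hball1 : ∀ lam : ℝ, 0 < lam →
      θ (closedBall (1:G) lam) = ENNReal.ofReal (lam ^ d) * c := by
    intro lam hlam
    have hpre : δ lam ⁻¹' (closedBall (1:G) lam) = closedBall (1:G) 1 := by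
      ext x
      simp only [mem_preimage, Metric.mem_closedBall]
      have h1 : dist (δ lam x) 1 = lam * dist x 1 := by
        conv_lhs => rw [← hδ_one lam]
        exact hhom lam hlam x 1
      rw [h1]
      exact mul_le_iff_le_one_right hlam
    have hmeasδ : Measurable (δ lam) := (hδcont lam hlam).measurable
    have h1 : (Measure.map (δ lam) θ) (closedBall (1:G) lam) = c := by
      rw [Measure.map_apply hmeasδ measurableSet_closedBall, hpre]
    rw [hθ_scal lam hlam] at h1
    have h2 : ENNReal.ofReal (lam ^ (-d)) * θ (closedBall (1:G) lam) = c := by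
      simpa [Measure.smul_apply, smul_eq_mul] using h1
    have hmul : ENNReal.ofReal (lam ^ d) * ENNReal.ofReal (lam ^ (-d)) = 1 := by
      rw [← ENNReal.ofReal_mul (Real.rpow_nonneg hlam.le d), ← Real.rpow_add hlam]
      simp
    calc θ (closedBall (1:G) lam)
        = (ENNReal.ofReal (lam ^ d) * ENNReal.ofReal (lam ^ (-d))) *
            θ (closedBall (1:G) lam) := by rw [hmul, one_mul]
      _ = ENNReal.ofReal (lam ^ d) *
            (ENNReal.ofReal (lam ^ (-d)) * θ (closedBall (1:G) lam)) := by ring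
      _ = ENNReal.ofReal (lam ^ d) * c := by rw [h2]
  -- translation of balls
  have hball : ∀ p ∈ P, ∀ r : ℝ, 0 < r →
      θ (closedBall p r) = ENNReal.ofReal (r ^ d) * c := by
    intro p hp r hr
    have hpre : (fun x => p * x) ⁻¹' (closedBall p r) = closedBall (1:G) r := by
      ext x
      simp only [mem_preimage, Metric.mem_closedBall]
      rw [show dist (p * x) p = dist x 1 from by
        calc dist (p * x) p = dist (p * x) (p * 1) := by rw [mul_one]
          _ = dist x 1 := hleft p x 1]
    have : θ (closedBall p r) = θ (closedBall (1:G) r) := by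
      conv_lhs => rw [← hθ_inv p hp]
      rw [Measure.map_apply (hiso p).continuous.measurable measurableSet_closedBall, hpre]
    rw [this, hball1 r hr]
  have hcfin : c < ⊤ := hθ_fin _ (isCompact_closedBall 1 1)
  have hcpos : 0 < c := by
    by_contra h
    push_neg at h
    have hc0 : c = 0 := le_antisymm h zero_le
    have huniv : θ (univ : Set G) = 0 := by
      have hcover : (univ : Set G) = ⋃ n : ℕ, closedBall (1:G) (n+1) := by
        ext x
        simp only [mem_univ, mem_iUnion, Metric.mem_closedBall, true_iff]
        obtain ⟨n, hn⟩ := exists_nat_ge (dist x 1)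
        exact ⟨n, by push_cast; linarith⟩
      rw [hcover]
      refine le_antisymm ((measure_iUnion_le _).trans ?_) zero_le
      have : ∀ n : ℕ, θ (closedBall (1:G) (n+1)) = 0 := by
        intro n
        rw [hball1 (n+1) (by positivity), hc0, mul_zero]
      simp [this]
    exact hθ_ne (by rwa [← Measure.measure_univ_eq_zero])
  -- mass distribution estimate
  have hmass : ∀ E : Set G, (E ∩ (P : Set G)).Nonempty →
      θ E ≤ c * EMetric.diam E ^ d := by
    intro E ⟨p, hpE, hpP⟩
    rcases eq_or_ne (EMetric.diam E) ⊤ with htop | htop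
    · rw [htop, ENNReal.top_rpow_of_pos hd, ENNReal.mul_top hcpos.ne']
      exact le_top
    have hbdd : Bornology.IsBounded E := by
      rw [Metric.isBounded_iff_ediam_ne_top]; exact htop
    set D : ℝ := Metric.diam E with hD
    have hle : ∀ η : ℝ, 0 < η → θ E ≤ ENNReal.ofReal ((D + η) ^ d) * c := by
      intro η hη
      have hsub : E ⊆ closedBall p (D + η) := fun w hw =>
        Metric.mem_closedBall.2 ((Metric.dist_le_diam_of_mem hbdd hw hpE).trans
          (by linarith))
      calc θ E ≤ θ (closedBall p (D + η)) := measure_mono hsub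
        _ = ENNReal.ofReal ((D + η) ^ d) * c :=
            hball p hpP (D + η) (by
              have hD0 : (0:ℝ) ≤ D := Metric.diam_nonneg
              linarith)
    have htend : Filter.Tendsto (fun η : ℝ => ENNReal.ofReal ((D + η) ^ d) * c)
        (nhdsWithin 0 (Ioi 0)) (nhds (ENNReal.ofReal (D ^ d) * c)) := by
      have h1 : Filter.Tendsto (fun η : ℝ => ENNReal.ofReal ((D + η) ^ d))
          (nhdsWithin 0 (Ioi 0)) (nhds (ENNReal.ofReal (D ^ d))) := by
        refine (ENNReal.continuous_ofReal.tendsto _).comp ?_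
        refine Filter.Tendsto.mono_left ?_ nhdsWithin_le_nhds
        have hadd : Filter.Tendsto (fun η : ℝ => D + η) (nhds 0) (nhds (D + 0)) :=
          ((continuous_const.add continuous_id).tendsto 0)
        have hcont : Filter.Tendsto (fun η : ℝ => (D + η) ^ d) (nhds 0)
            (nhds ((D + 0) ^ d)) :=
          (Real.continuousAt_rpow_const (D + 0) d (Or.inr hd.le)).comp hadd
        simpa using hcont
      exact ENNReal.Tendsto.mul_const h1 (Or.inr hcfin.ne)
    have := ge_of_tendsto htend (Filter.eventually_iff_exists_mem.2
      ⟨Ioi 0, self_mem_nhdsWithin, fun η hη => hle η hη⟩)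
    calc θ E ≤ ENNReal.ofReal (D ^ d) * c := this
      _ = c * EMetric.diam E ^ d := by
          rw [mul_comm]
          congr 1
          rw [show EMetric.diam E = ENNReal.ofReal D from (ENNReal.ofReal_toReal htop).symm,
            ENNReal.ofReal_rpow_of_nonneg Metric.diam_nonneg hd.le]
  -- lower bound : θ ≤ c * Hausdorff on P
  have hlowH : ∀ A : Set G, θ A ≤ c * μH[d] (A ∩ (P : Set G)) := by
    intro A
    have hAP : θ A = θ (A ∩ (P : Set G)) := (measure_inter_conull hθ_null).symm
    set S := A ∩ (P : Set G) with hS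
    rw [hAP, Measure.hausdorffMeasure_apply]
    have key : ∀ t : ℕ → Set G, S ⊆ ⋃ n, t n →
        θ S ≤ c * ∑' n, ⨆ _ : (t n).Nonempty, EMetric.diam (t n) ^ d := by
      intro t hcov
      have h1 : θ S ≤ ∑' n, θ (S ∩ t n) := by
        refine (measure_mono ?_).trans (measure_iUnion_le _)
        intro x hx
        obtain ⟨n, hn⟩ := mem_iUnion.1 (hcov hx)
        exact mem_iUnion.2 ⟨n, hx, hn⟩
      have h2 : ∀ n, θ (S ∩ t n) ≤
          c * ⨆ _ : (t n).Nonempty, EMetric.diam (t n) ^ d := by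
        intro n
        rcases (S ∩ t n).eq_empty_or_nonempty with he | ⟨q, hq⟩
        · simp [he]
        · have hqP : q ∈ (P : Set G) := hq.1.2
          have hqt : q ∈ t n := hq.2
          rw [iSup_pos ⟨q, hqt⟩]
          calc θ (S ∩ t n) ≤ c * EMetric.diam (S ∩ t n) ^ d :=
                hmass _ ⟨q, ⟨hq.1, hq.2⟩, hqP⟩
            _ ≤ c * EMetric.diam (t n) ^ d :=
                mul_le_mul_right
                  (ENNReal.rpow_le_rpow (EMetric.diam_mono inter_subset_right) hd.le) c
      calc θ S ≤ ∑' n, θ (S ∩ t n) := h1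
        _ ≤ ∑' n, c * ⨆ _ : (t n).Nonempty, EMetric.diam (t n) ^ d :=
            ENNReal.tsum_le_tsum h2
        _ = c * ∑' n, ⨆ _ : (t n).Nonempty, EMetric.diam (t n) ^ d :=
            ENNReal.tsum_mul_left
    calc θ S = c * (θ S / c) := (ENNReal.mul_div_cancel hcpos.ne' hcfin.ne).symm
      _ ≤ c * ⨆ (r : ℝ≥0∞) (_ : 0 < r),
            ⨅ (t : ℕ → Set G) (_ : S ⊆ iUnion t) (_ : ∀ n, EMetric.diam (t n) ≤ r),
              ∑' n, ⨆ _ : (t n).Nonempty, EMetric.diam (t n) ^ d := by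
          gcongr
          refine le_trans ?_ (le_iSup₂ (1 : ℝ≥0∞) one_pos)
          refine le_iInf fun t => le_iInf fun ht => le_iInf fun _ => ?_
          exact ENNReal.div_le_of_le_mul' (key t ht)
  -- finiteness of Hausdorff measure on bounded pieces of P
  have hfinH : ∀ R : ℝ, 0 < R →
      μH[d] ((P : Set G) ∩ closedBall (1:G) R) < ⊤ := by
    intro R hR
    set K : Set G := (P : Set G) ∩ closedBall (1:G) R with hK
    have hKP : K ⊆ (P : Set G) := inter_subset_left
    have hKB : K ⊆ closedBall (1:G) R := inter_subset_right
    have hnet : ∀ ε : ℝ, 0 < ε → ε ≤ 1 → ∃ F : Finset G,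
        (↑F ⊆ K) ∧ (K ⊆ ⋃ x ∈ F, ball x ε) ∧
        (F.card : ℝ≥0∞) * ENNReal.ofReal ((ε/3) ^ d) ≤ ENNReal.ofReal ((R+1) ^ d) := by
      intro ε hε hε1
      have hchainub : ∀ C ⊆ {s : Set G | s ⊆ K ∧ s.Pairwise fun x y => ε ≤ dist x y},
          IsChain (· ⊆ ·) C → ∃ ub ∈ {s : Set G | s ⊆ K ∧
            s.Pairwise fun x y => ε ≤ dist x y}, ∀ s ∈ C, s ⊆ ub := by
        intro C hC hchain
        refine ⟨⋃₀ C, ⟨?_, ?_⟩, fun s hs => subset_sUnion_of_mem hs⟩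
        · exact sUnion_subset fun s hs => (hC hs).1
        · intro x hx y hy hxy
          obtain ⟨s, hsC, hxs⟩ := hx
          obtain ⟨t, htC, hyt⟩ := hy
          rcases hchain.total hsC htC with hst | hts
          · exact (hC htC).2 (hst hxs) hyt hxy
          · exact (hC hsC).2 hxs (hts hyt) hxy
      obtain ⟨m, hm⟩ := zorn_subset
          {s : Set G | s ⊆ K ∧ s.Pairwise fun x y => ε ≤ dist x y} hchainub
      obtain ⟨hmK, hmsep⟩ := hm.prop
      -- pairwise disjoint small closed balls
      have hdisj : (m : Set G).PairwiseDisjoint fun x => closedBall x (ε/3) := by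
        intro x hx y hy hxy
        refine Set.disjoint_left.2 fun w hwx hwy => ?_
        have h1 : dist x y ≤ dist x w + dist w y := dist_triangle _ _ _
        have h2 : dist x w ≤ ε/3 := by rw [dist_comm]; exact hwx
        have h3 : dist w y ≤ ε/3 := hwy
        have h4 : ε ≤ dist x y := hmsep hx hy hxy
        linarith
      -- m is finite
      have hfin : m.Finite := by
        by_contra hinf
        have hinf2 : m.Infinite := hinf
        set f := hinf2.natEmbedding with hf
        have hdisj2 : Pairwise (Function.onFun Disjoint
            fun n : ℕ => closedBall ((f n : G)) (ε/3)) := by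
          intro i j hij
          exact hdisj (f i).2 (f j).2 (fun h => hij (f.injective (Subtype.ext h)))
        have hsum : θ (⋃ n : ℕ, closedBall ((f n : G)) (ε/3)) =
            ∑' n : ℕ, θ (closedBall ((f n : G)) (ε/3)) :=
          measure_iUnion hdisj2 fun n => measurableSet_closedBall
        have hval : ∀ n : ℕ, θ (closedBall ((f n : G)) (ε/3)) =
            ENNReal.ofReal ((ε/3) ^ d) * c := fun n =>
          hball _ (hKP (hmK (f n).2)) _ (by linarith)
        have htop2 : θ (⋃ n : ℕ, closedBall ((f n : G)) (ε/3)) = ⊤ := by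
          rw [hsum]
          simp only [hval]
          refine ENNReal.tsum_const_eq_top_of_ne_zero ?_
          refine mul_ne_zero ?_ hcpos.ne'
          simp only [ne_eq, ENNReal.ofReal_eq_zero, not_le]
          positivity
        have hsub : (⋃ n : ℕ, closedBall ((f n : G)) (ε/3)) ⊆
            closedBall (1:G) (R+1) := by
          refine iUnion_subset fun n w hw => ?_
          have h1 : dist w (f n : G) ≤ ε/3 := hw
          have h2 : dist (f n : G) 1 ≤ R := hKB (hmK (f n).2)
          have : dist w 1 ≤ dist w (f n : G) + dist (f n : G) 1 := dist_triangle _ _ _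
          simp only [Metric.mem_closedBall]
          linarith
        have := (measure_mono hsub).trans_lt (hθ_fin _ (isCompact_closedBall 1 (R+1)))
        rw [htop2] at this
        exact absurd this (by simp)
      refine ⟨hfin.toFinset, by simpa using hmK, ?_, ?_⟩
      · -- covering property from maximality
        intro z hz
        have hex : ∃ x ∈ m, dist z x < ε := by
          by_contra hcon
          push_neg at hcon
          have hzm : z ∈ m := by
            have hmem : insert z m ∈
                {s : Set G | s ⊆ K ∧ s.Pairwise fun x y => ε ≤ dist x y} := by
              refine ⟨insert_subset hz hmK, ?_⟩
              refine (letI : Std.Symm (fun x y : G => ε ≤ dist x y) := ⟨fun a b hab => ?_⟩; pairwise_insert_of_symm).2 ⟨hmsep, ?_⟩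
              · rwa [dist_comm]
              · intro x hx _
                exact hcon x hx
            have := hm.2 hmem (subset_insert z m)
            exact this (mem_insert z m)
          have := hcon z hzm
          simp at this
          linarith
        obtain ⟨x, hxm, hxd⟩ := hex
        exact mem_iUnion₂.2 ⟨x, hfin.mem_toFinset.2 hxm, mem_ball.2 hxd⟩
      · -- cardinality bound
        have hdisjF : (↑hfin.toFinset : Set G).PairwiseDisjoint
            fun x => closedBall x (ε/3) := by
          rw [Set.Finite.coe_toFinset]
          exact hdisj
        have hsum : ∑ x ∈ hfin.toFinset, θ (closedBall x (ε/3)) =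
            θ (⋃ x ∈ hfin.toFinset, closedBall x (ε/3)) :=
          (measure_biUnion_finset hdisjF fun x _ => measurableSet_closedBall).symm
        have hval : ∀ x ∈ hfin.toFinset, θ (closedBall x (ε/3)) =
            ENNReal.ofReal ((ε/3) ^ d) * c := fun x hx =>
          hball _ (hKP (hmK (hfin.mem_toFinset.1 hx))) _ (by linarith)
        have hsub : (⋃ x ∈ hfin.toFinset, closedBall x (ε/3)) ⊆
            closedBall (1:G) (R+1) := by
          refine iUnion₂_subset fun x hx w hw => ?_
          have h1 : dist w x ≤ ε/3 := hw
          have h2 : dist x 1 ≤ R := hKB (hmK (hfin.mem_toFinset.1 hx))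
          have h3 : dist w 1 ≤ dist w x + dist x 1 := dist_triangle _ _ _
          simp only [Metric.mem_closedBall]
          linarith
        have hbound : (hfin.toFinset.card : ℝ≥0∞) * (ENNReal.ofReal ((ε/3) ^ d) * c) ≤
            ENNReal.ofReal ((R+1) ^ d) * c := by
          calc (hfin.toFinset.card : ℝ≥0∞) * (ENNReal.ofReal ((ε/3) ^ d) * c)
              = ∑ x ∈ hfin.toFinset, θ (closedBall x (ε/3)) := by
                rw [Finset.sum_congr rfl hval, Finset.sum_const, nsmul_eq_mul]
            _ = θ (⋃ x ∈ hfin.toFinset, closedBall x (ε/3)) := hsum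
            _ ≤ θ (closedBall (1:G) (R+1)) := measure_mono hsub
            _ = ENNReal.ofReal ((R+1) ^ d) * c := hball 1 P.one_mem _ (by linarith)
        rw [← mul_assoc] at hbound
        exact (ENNReal.mul_le_mul_iff_left hcpos.ne' hcfin.ne).1 hbound
    -- now apply the covering criterion
    have hcovn : ∀ n : ℕ, ∃ F : Finset G,
        (↑F ⊆ K) ∧ (K ⊆ ⋃ x ∈ F, ball x (1/(n+1))) ∧
        (F.card : ℝ≥0∞) * ENNReal.ofReal ((1/(n+1)/3) ^ d) ≤
          ENNReal.ofReal ((R+1) ^ d) := by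
      intro n
      refine hnet (1/(n+1)) (by positivity) ?_
      rw [div_le_one (by positivity)]
      have : (0:ℝ) ≤ n := Nat.cast_nonneg n
      linarith
    choose F hF1 hF2 hF3 using hcovn
    have hdiamball : ∀ (x : G) (u : ℝ), 0 < u →
        EMetric.diam (ball x u) ≤ ENNReal.ofReal (2*u) := by
      intro x u hu
      refine EMetric.diam_le fun a ha b hb => ?_
      rw [edist_dist]
      refine ENNReal.ofReal_le_ofReal ?_
      have h2 : dist a x < u := ha
      have h3 : dist b x < u := hb
      have h4 : dist a b ≤ dist a x + dist x b := dist_triangle _ _ _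
      rw [dist_comm x b] at h4
      linarith
    have hmain : μH[d] K ≤
        ENNReal.ofReal (6 ^ d) * ENNReal.ofReal ((R+1) ^ d) := by
      have hlim := Measure.hausdorffMeasure_le_liminf_sum (l := (Filter.atTop : Filter ℕ)) d K
        (fun n : ℕ => ENNReal.ofReal (2 * (1/((n:ℝ)+1))))
        ?_ (fun n (i : F n) => ball (i : G) (1/((n:ℝ)+1))) ?_ ?_
      · refine hlim.trans ?_
        refine Filter.liminf_le_of_frequently_le' (Filter.Frequently.of_forall fun n => ?_)
        have hterm : ∀ i : F n, EMetric.diam (ball (i : G) (1/((n:ℝ)+1))) ^ d ≤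
            ENNReal.ofReal ((2 * (1/((n:ℝ)+1))) ^ d) := by
          intro i
          calc EMetric.diam (ball (i : G) (1/((n:ℝ)+1))) ^ d ≤
              ENNReal.ofReal (2 * (1/((n:ℝ)+1))) ^ d :=
                ENNReal.rpow_le_rpow (hdiamball _ _ (by positivity)) hd.le
            _ = ENNReal.ofReal ((2 * (1/((n:ℝ)+1))) ^ d) :=
              ENNReal.ofReal_rpow_of_nonneg (by positivity) hd.le
        calc ∑ i : F n, EMetric.diam (ball (i : G) (1/((n:ℝ)+1))) ^ d
            ≤ ∑ _i : F n, ENNReal.ofReal ((2 * (1/((n:ℝ)+1))) ^ d) :=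
              Finset.sum_le_sum fun i _ => hterm i
          _ = ((F n).card : ℝ≥0∞) * ENNReal.ofReal ((2 * (1/((n:ℝ)+1))) ^ d) := by
              rw [Finset.sum_const, nsmul_eq_mul]
              simp
          _ = ((F n).card : ℝ≥0∞) * (ENNReal.ofReal (6 ^ d) *
                ENNReal.ofReal ((1/((n:ℝ)+1)/3) ^ d)) := by
              congr 1
              rw [← ENNReal.ofReal_mul (by positivity)]
              congr 1
              rw [← Real.mul_rpow (by norm_num) (by positivity)]
              congr 1
              ring
          _ = ENNReal.ofReal (6 ^ d) *
                (((F n).card : ℝ≥0∞) * ENNReal.ofReal ((1/((n:ℝ)+1)/3) ^ d)) := by ring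
          _ ≤ ENNReal.ofReal (6 ^ d) * ENNReal.ofReal ((R+1) ^ d) := by
              exact mul_le_mul_right (hF3 n) _
      · rw [show (0:ℝ≥0∞) = ENNReal.ofReal (2 * 0) by simp]
        refine (ENNReal.continuous_ofReal.tendsto (2 * 0)).comp ?_
        exact tendsto_one_div_add_atTop_nhds_zero_nat.const_mul 2
      · refine Filter.Eventually.of_forall fun n => fun i => ?_
        exact hdiamball _ _ (by positivity)
      · refine Filter.Eventually.of_forall fun n => ?_
        intro z hz
        obtain ⟨x, hx, hxz⟩ := mem_iUnion₂.1 (hF2 n hz)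
        exact mem_iUnion.2 ⟨⟨x, hx⟩, hxz⟩
    refine hmain.trans_lt (ENNReal.mul_lt_top ENNReal.ofReal_lt_top ENNReal.ofReal_lt_top)
  -- comparison between ψ and the Hausdorff measure
  have hψ_ge : ∀ A : Set G, MeasurableSet A → μH[d] A ≤ ψ A := by
    rcases hψ with rfl | rfl
    · exact fun A _ => le_rfl
    · exact fun A hA => hausdorff_le_spherical hd hA
  have hψ_le : ∀ A : Set G, MeasurableSet A → ψ A ≤ (2:ℝ≥0∞) ^ d * μH[d] A := by
    rcases hψ with rfl | rfl
    · intro A _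
      refine le_mul_of_one_le_left zero_le ?_
      calc (1:ℝ≥0∞) = 2 ^ (0:ℝ) := by simp
        _ ≤ 2 ^ d := ENNReal.rpow_le_rpow_of_exponent_le (by norm_num) hd.le
    · exact fun A hA => spherical_le_hausdorff hd hA
  have hmapψ : ∀ p ∈ P, Measure.map (fun x => p * x) ψ = ψ := by
    intro p hp
    have hsurj : Surjective (fun x : G => p * x) := fun y => ⟨p⁻¹ * y, by
      simp [← mul_assoc]⟩
    rcases hψ with rfl | rfl
    · rw [(hiso p).map_hausdorffMeasure (Or.inr hsurj), Surjective.range_eq hsurj,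
        Measure.restrict_univ]
    · let e : G ≃ᵢ G :=
        { toFun := fun x => p * x
          invFun := fun y => p⁻¹ * y
          left_inv := fun x => by simp [← mul_assoc]
          right_inv := fun y => by simp [← mul_assoc]
          isometry_toFun := hiso p }
      exact sphericalMeasure_map d e
  refine ⟨?_, ?_, ?_, ?_⟩
  · -- nonzero
    intro h0
    have h1 : ψ ((P : Set G)) = 0 := by
      have := congrArg (fun μ : Measure G => μ (univ : Set G)) h0
      simpa [Measure.restrict_apply_univ] using this
    have h2 : μH[d] ((P : Set G)) = 0 :=
      le_antisymm ((hψ_ge _ hPmeas).trans h1.le) zero_le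
    have h3 : θ (univ : Set G) = 0 := by
      have := hlowH (univ : Set G)
      rw [univ_inter, h2, mul_zero] at this
      exact le_antisymm this zero_le
    exact hθ_ne (Measure.measure_univ_eq_zero.1 h3)
  · -- left invariance
    intro p hp
    have hfmeas : Measurable (fun x : G => p * x) := (hiso p).continuous.measurable
    have hfP : (fun x : G => p * x) ⁻¹' (P : Set G) = (P : Set G) := by
      ext x
      simp only [mem_preimage, SetLike.mem_coe]
      exact P.mul_mem_cancel_left hp
    calc Measure.map (fun x => p * x) (ψ.restrict (P : Set G))
        = Measure.map (fun x => p * x)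
            (ψ.restrict ((fun x : G => p * x) ⁻¹' (P : Set G))) := by rw [hfP]
      _ = (Measure.map (fun x => p * x) ψ).restrict (P : Set G) :=
          (Measure.restrict_map hfmeas hPmeas).symm
      _ = ψ.restrict (P : Set G) := by rw [hmapψ p hp]
  · -- local finiteness
    intro K hK
    obtain ⟨R, hKR⟩ := hK.isBounded.subset_closedBall (1:G)
    have hR' : (0:ℝ) < max R 1 := lt_of_lt_of_le one_pos (le_max_right _ _)
    have hKR' : K ⊆ closedBall (1:G) (max R 1) :=
      hKR.trans (closedBall_subset_closedBall (le_max_left _ _))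
    have hmeasB : MeasurableSet ((P : Set G) ∩ closedBall (1:G) (max R 1)) :=
      hPmeas.inter measurableSet_closedBall
    calc ψ.restrict (P : Set G) K = ψ (K ∩ (P : Set G)) :=
          Measure.restrict_apply' hPmeas
      _ ≤ ψ ((P : Set G) ∩ closedBall (1:G) (max R 1)) :=
          measure_mono fun x hx => ⟨hx.2, hKR' hx.1⟩
      _ ≤ (2:ℝ≥0∞) ^ d * μH[d] ((P : Set G) ∩ closedBall (1:G) (max R 1)) :=
          hψ_le _ hmeasB
      _ < ⊤ := ENNReal.mul_lt_top
          (ENNReal.rpow_lt_top_of_nonneg hd.le ENNReal.ofNat_ne_top)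
          (hfinH _ hR')
  · -- positivity on open sets meeting P
    intro U hU hne
    by_contra h
    push_neg at h
    have h0 : ψ.restrict (P : Set G) U = 0 := le_antisymm h zero_le
    rw [Measure.restrict_apply' hPmeas] at h0
    have h2 : μH[d] (U ∩ (P : Set G)) = 0 :=
      le_antisymm ((hψ_ge _ (hU.measurableSet.inter hPmeas)).trans h0.le) zero_le
    have h3 : θ U = 0 := by
      have := hlowH U
      rw [h2, mul_zero] at this
      exact le_antisymm this zero_le
    exact absurd (hθ_pos U hU hne) (by simp [h3])

end Main
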